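/- arXiv:math/0612513 — 2 statements merged into one kernel-verified Lean document; each statement's English description precedes it below -/
import Mathlib

section
/- Let S = (P, L) be a generalized quadrangle of order (2,t) and let (R, ψ) be a representation of S (not necessarily faithful). Then R is an elementary abelian 2-group, i.e., R is abelian and every element of R has order at most 2. -/
open scoped Classical

/-- A slim partial linear space: a nonempty point set, a nonempty collection of
lines each of which is a 3-element set of points, such that any two distinct
points lie in at most one common line. -/
structure SlimPLS (P : Type*) where
  lines : Set (Finset P)
  nonempty_pts : Nonempty P
  nonempty_lines : lines.Nonempty
  three_points : ∀ l ∈ lines, l.card = 3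
  unique_line : ∀ l₁ ∈ lines, ∀ l₂ ∈ lines, ∀ x y : P,
    x ≠ y → x ∈ l₁ → y ∈ l₁ → x ∈ l₂ → y ∈ l₂ → l₁ = l₂

namespace SlimPLS

variable {P : Type*}

/-- Two points are collinear if they are distinct and lie on a common line. -/
def Collinear (S : SlimPLS P) (x y : P) : Prop :=
  x ≠ y ∧ ∃ l ∈ S.lines, x ∈ l ∧ y ∈ l

/-- The collinearity graph of a slim partial linear space. -/
def graph (S : SlimPLS P) : SimpleGraph P where
  Adj x y := S.Collinear x y
  symm := ⟨fun x y h => ⟨Ne.symm h.1, h.2.elim fun l hl => ⟨l, hl.1, hl.2.2, hl.2.1⟩⟩⟩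
  loopless := ⟨fun x h => h.1 rfl⟩

/-- `S` is a generalized quadrangle of order `(2, t)`: it is connected, no point
is collinear with all other points, every point is on exactly `t+1` lines, and
for every point `x` and line `l` with `x ∉ l` there is exactly one point of `l`
collinear with `x`. -/
def IsGQ (S : SlimPLS P) (t : ℕ) : Prop :=
  S.graph.Connected ∧
  (∀ x : P, ∃ y : P, y ≠ x ∧ ¬ S.Collinear x y) ∧
  (∀ x : P, {l | l ∈ S.lines ∧ x ∈ l}.ncard = t + 1) ∧
  (∀ x : P, ∀ l ∈ S.lines, x ∉ l → ∃! y : P, y ∈ l ∧ S.Collinear x y)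

/-- A set of points is an arc if its points are pairwise non-collinear. -/
def IsArc (S : SlimPLS P) (T : Set P) : Prop :=
  ∀ x ∈ T, ∀ y ∈ T, x ≠ y → ¬ S.Collinear x y

/-- `{a,b,c}` is a complete 3-arc: three pairwise distinct, pairwise
non-collinear points not contained in a 4-arc. -/
def Complete3Arc (S : SlimPLS P) (a b c : P) : Prop :=
  a ≠ b ∧ a ≠ c ∧ b ≠ c ∧ S.IsArc {a, b, c} ∧
  ∀ d : P, d ∉ ({a, b, c} : Set P) → ¬ S.IsArc (insert d {a, b, c})

/-- `{a,b,c}` is a complete 3-arc of the subset `Q`: three pairwise distinct,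
pairwise non-collinear points of `Q` not contained in a 4-arc inside `Q`. -/
def Complete3ArcIn (S : SlimPLS P) (Q : Set P) (a b c : P) : Prop :=
  a ∈ Q ∧ b ∈ Q ∧ c ∈ Q ∧ a ≠ b ∧ a ≠ c ∧ b ≠ c ∧ S.IsArc {a, b, c} ∧
  ∀ d ∈ Q, d ∉ ({a, b, c} : Set P) → ¬ S.IsArc (insert d {a, b, c})

/-- `Q` is a sub-generalized-quadrangle of order `(2,t)` of `S`: together with
the lines of `S` contained in it, `Q` is a `(2,t)`-GQ; in particular any line
meeting `Q` in at least two points is contained in `Q`. -/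
def IsSubGQ (S : SlimPLS P) (Q : Set P) (t : ℕ) : Prop :=
  Q.Nonempty ∧
  (∃ l ∈ S.lines, (l : Set P) ⊆ Q) ∧
  (∀ l ∈ S.lines, ∀ x ∈ l, ∀ y ∈ l, x ≠ y → x ∈ Q → y ∈ Q → (l : Set P) ⊆ Q) ∧
  (SimpleGraph.induce Q S.graph).Connected ∧
  (∀ x ∈ Q, ∃ y ∈ Q, y ≠ x ∧ ¬ S.Collinear x y) ∧
  (∀ x ∈ Q, {l | l ∈ S.lines ∧ x ∈ l ∧ (l : Set P) ⊆ Q}.ncard = t + 1) ∧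
  (∀ x ∈ Q, ∀ l ∈ S.lines, (l : Set P) ⊆ Q → x ∉ l → ∃! y : P, y ∈ l ∧ S.Collinear x y)

/-- `S` is a near hexagon: connected of diameter 3, no point collinear with all
other points, and for every point `x` and line `l` there is a unique point of
`l` nearest to `x`. -/
def IsNearHexagon (S : SlimPLS P) : Prop :=
  S.graph.Connected ∧
  (∀ x y : P, S.graph.dist x y ≤ 3) ∧
  (∃ x y : P, S.graph.dist x y = 3) ∧
  (∀ x : P, ∃ y : P, y ≠ x ∧ ¬ S.Collinear x y) ∧
  (∀ x : P, ∀ l ∈ S.lines, ∃! y : P, y ∈ l ∧ ∀ z ∈ l, S.graph.dist x y ≤ S.graph.dist x z)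

/-- `S` is dense: any two points at distance 2 have at least two common
neighbours. -/
def IsDense (S : SlimPLS P) : Prop :=
  ∀ x y : P, S.graph.dist x y = 2 →
    ∃ u v : P, u ≠ v ∧ S.Collinear x u ∧ S.Collinear u y ∧ S.Collinear x v ∧ S.Collinear v y

/-- `Q` is a quad: a convex subset of diameter 2 in which no point is collinear
with all other points of `Q`. -/
def IsQuad (S : SlimPLS P) (Q : Set P) : Prop :=
  (∀ u ∈ Q, ∀ v ∈ Q, ∀ w : P,
      S.graph.dist u w + S.graph.dist w v = S.graph.dist u v → w ∈ Q) ∧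
  (∀ u ∈ Q, ∀ v ∈ Q, S.graph.dist u v ≤ 2) ∧
  (∃ u ∈ Q, ∃ v ∈ Q, S.graph.dist u v = 2) ∧
  (∀ u ∈ Q, ∃ v ∈ Q, v ≠ u ∧ ¬ S.Collinear u v)

/-- A quad `Q` is of type `(2, t₂)` if every point of `Q` lies on exactly
`t₂ + 1` lines contained in `Q`. -/
def QuadType (S : SlimPLS P) (Q : Set P) (t₂ : ℕ) : Prop :=
  ∀ x ∈ Q, {l | l ∈ S.lines ∧ x ∈ l ∧ (l : Set P) ⊆ Q}.ncard = t₂ + 1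

/-- The point-quad pair `(x, Q)` is classical: there is a unique point `y ∈ Q`
nearest to `x`, with `d(x,z) = d(x,y) + d(y,z)` for all `z ∈ Q`. -/
def IsClassicalPair (S : SlimPLS P) (x : P) (Q : Set P) : Prop :=
  ∃! y : P, y ∈ Q ∧ ∀ z ∈ Q, S.graph.dist x z = S.graph.dist x y + S.graph.dist y z

/-- A quad is classical (big) if every point-quad pair with it is classical. -/
def IsClassicalQuad (S : SlimPLS P) (Q : Set P) : Prop :=
  ∀ x : P, S.IsClassicalPair x Q

/-- A subspace: any line containing two of its points is contained in it. -/
def IsSubspace (S : SlimPLS P) (X : Set P) : Prop :=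
  ∀ l ∈ S.lines, ∀ x ∈ l, ∀ y ∈ l, x ≠ y → x ∈ X → y ∈ X → (l : Set P) ⊆ X

/-- The subspace generated by a set of points. -/
def subspaceGen (S : SlimPLS P) (A : Set P) : Set P :=
  ⋂₀ {X | S.IsSubspace X ∧ A ⊆ X}

/-- `NPdim S` is the rank over `F₂` of the distance-3 adjacency matrix. -/
noncomputable def NPdim [Fintype P] (S : SlimPLS P) : ℕ :=
  Matrix.rank (Matrix.of fun x y : P => if S.graph.dist x y = 3 then (1 : ZMod 2) else 0)

/-- `dimV S` is the dimension of the universal representation module of `S`: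
the free `F₂`-vector space on the points modulo the span of the elements
`v_x + v_y + v_z` for the lines `{x,y,z}`. -/
noncomputable def dimV (S : SlimPLS P) : ℕ :=
  Module.finrank (ZMod 2)
    ((P →₀ ZMod 2) ⧸ Submodule.span (ZMod 2)
      {f : P →₀ ZMod 2 | ∃ l ∈ S.lines, f = ∑ x ∈ l, Finsupp.single x 1})

end SlimPLS

/-- A representation of a slim partial linear space `S`: an assignment of an
order-2 element `r x` of `R` to each point `x`, such that the images generate
`R` and for every line `{x,y,z}` the set `{1, r x, r y, r z}` is a Klein four
subgroup (`r x * r y = r z` for the three pairwise distinct points of a line). -/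
structure SlimPLS.Rep {P : Type*} (S : SlimPLS P) (R : Type*) [Group R] where
  r : P → R
  order_two : ∀ x : P, orderOf (r x) = 2
  gen : Subgroup.closure (Set.range r) = ⊤
  line_rel : ∀ l ∈ S.lines, ∀ x ∈ l, ∀ y ∈ l, ∀ z ∈ l,
    x ≠ y → x ≠ z → y ≠ z → r x * r y = r z

/-- A finite 2-group is extraspecial if its Frattini subgroup, commutator
subgroup and center coincide and have order 2. -/
def IsExtraspecial (G : Type*) [Group G] : Prop :=
  Finite G ∧ IsPGroup 2 G ∧ frattini G = commutator G ∧
    commutator G = Subgroup.center G ∧ Nat.card (Subgroup.center G) = 2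

section GQRepAux

/-! ### Auxiliary group-theoretic lemmas: Klein triples and the 3×3 grid -/

/-- `GK p q r` says that `p, q, r` multiply into each other in all orders
(the multiplicative relations of a Klein four-group `{1, p, q, r}`). -/
def GK {R : Type*} [Group R] (p q r : R) : Prop :=
  p * q = r ∧ q * p = r ∧ q * r = p ∧ r * q = p ∧ p * r = q ∧ r * p = q

namespace GK

variable {R : Type*} [Group R] {p q r : R}

theorem cycle (h : GK p q r) : GK q r p :=
  ⟨h.2.2.1, h.2.2.2.1, h.2.2.2.2.2, h.2.2.2.2.1, h.2.1, h.1⟩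

theorem swap12 (h : GK p q r) : GK q p r :=
  ⟨h.2.1, h.1, h.2.2.2.2.1, h.2.2.2.2.2, h.2.2.1, h.2.2.2.1⟩

theorem swap23 (h : GK p q r) : GK p r q :=
  ⟨h.2.2.2.2.1, h.2.2.2.2.2, h.2.2.2.1, h.2.2.1, h.1, h.2.1⟩

end GK

/-- The fundamental grid identity: if the rows and columns of a 3×3 grid of
group elements are Klein triples, then `a4 * a3 * a7 * a2 = 1`. -/
theorem gridE {R : Type*} [Group R] (a1 a2 a3 a4 a5 a6 a7 a8 a9 : R)
    (h1 : GK a1 a2 a3) (h2 : GK a4 a5 a6) (h3 : GK a7 a8 a9)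
    (v1 : GK a1 a4 a7) (v2 : GK a2 a5 a8) (v3 : GK a3 a6 a9) :
    a4 * a3 * a7 * a2 = 1 := by
  have c14 : a1 * a4 = a4 * a1 := v1.1.trans v1.2.1.symm
  have c13 : a1 * a3 = a3 * a1 := h1.2.2.2.2.1.trans h1.2.2.2.2.2.symm
  have c17 : a1 * a7 = a7 * a1 := v1.2.2.2.2.1.trans v1.2.2.2.2.2.symm
  have c12 : a1 * a2 = a2 * a1 := h1.1.trans h1.2.1.symm
  have s5 : a4 * a6 = a5 := h2.2.2.2.2.1
  have s6 : a3 * a9 = a6 := v3.2.2.2.2.1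
  have s9 : a7 * a8 = a9 := h3.1
  have s8 : a2 * a5 = a8 := v2.1
  have hX : a1 * a5 * a1 = (a4 * a3 * a7 * a2) * (a1 * a5 * a1) := by
    calc a1 * a5 * a1 = a1 * (a4 * a6) * a1 := by rw [s5]
      _ = (a1 * a4) * (a6 * a1) := by simp only [mul_assoc]
      _ = (a4 * a1) * (a6 * a1) := by rw [c14]
      _ = a4 * (a1 * a6 * a1) := by simp only [mul_assoc]
      _ = a4 * (a1 * (a3 * a9) * a1) := by rw [s6]
      _ = a4 * ((a1 * a3) * (a9 * a1)) := by simp only [mul_assoc]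
      _ = a4 * ((a3 * a1) * (a9 * a1)) := by rw [c13]
      _ = a4 * (a3 * (a1 * a9 * a1)) := by simp only [mul_assoc]
      _ = a4 * (a3 * (a1 * (a7 * a8) * a1)) := by rw [s9]
      _ = a4 * (a3 * ((a1 * a7) * (a8 * a1))) := by simp only [mul_assoc]
      _ = a4 * (a3 * ((a7 * a1) * (a8 * a1))) := by rw [c17]
      _ = a4 * (a3 * (a7 * (a1 * a8 * a1))) := by simp only [mul_assoc]
      _ = a4 * (a3 * (a7 * (a1 * (a2 * a5) * a1))) := by rw [s8]
      _ = a4 * (a3 * (a7 * ((a1 * a2) * (a5 * a1)))) := by simp only [mul_assoc]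
      _ = a4 * (a3 * (a7 * ((a2 * a1) * (a5 * a1)))) := by rw [c12]
      _ = (a4 * a3 * a7 * a2) * (a1 * a5 * a1) := by simp only [mul_assoc]
  have h1X : (1 : R) * (a1 * a5 * a1) = (a4 * a3 * a7 * a2) * (a1 * a5 * a1) := by
    rw [one_mul]; exact hX
  exact (mul_right_cancel h1X).symm

/-- The key group-theoretic fact: in a 3×3 grid whose rows and columns are
Klein triples, opposite corner/center elements commute. -/
theorem gridComm {R : Type*} [Group R] (a1 a2 a3 a4 a5 a6 a7 a8 a9 : R)
    (h1 : GK a1 a2 a3) (h2 : GK a4 a5 a6) (h3 : GK a7 a8 a9)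
    (v1 : GK a1 a4 a7) (v2 : GK a2 a5 a8) (v3 : GK a3 a6 a9)
    (i1 : a1 * a1 = 1) (i3 : a3 * a3 = 1) (i5 : a5 * a5 = 1) (i8 : a8 * a8 = 1) :
    a1 * a5 = a5 * a1 := by
  have Eb : a1 * a6 * a7 * a5 = 1 :=
    gridE a4 a5 a6 a1 a2 a3 a7 a8 a9 h2 h1 h3 v1.swap12 v2.swap12 v3.swap12
  have Ee : a8 * a1 * a5 * a3 = 1 :=
    gridE a2 a3 a1 a8 a9 a7 a5 a6 a4 h1.cycle h3.cycle h2.cycle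
      v2.swap23 v3.swap23 v1.swap23
  have q1 : a1 * a5 = a6 * a7 := by
    calc a1 * a5 = a1 * 1 * a5 := by rw [mul_one]
      _ = a1 * (a1 * a6 * a7 * a5) * a5 := by rw [Eb]
      _ = (a1 * a1) * (a6 * a7) * (a5 * a5) := by simp only [mul_assoc]
      _ = a6 * a7 := by rw [i1, i5, one_mul, mul_one]
  have q2 : a1 * a5 = a8 * a3 := by
    calc a1 * a5 = (a8 * a8) * (a1 * a5) * (a3 * a3) := by
          rw [i8, i3, one_mul, mul_one]
      _ = a8 * (a8 * a1 * a5 * a3) * a3 := by simp only [mul_assoc]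
      _ = a8 * 1 * a3 := by rw [Ee]
      _ = a8 * a3 := by rw [mul_one]
  have key : (a1 * a5) * (a1 * a5) = 1 := by
    calc (a1 * a5) * (a1 * a5) = (a6 * a7) * (a8 * a3) := by rw [← q1, ← q2]
      _ = a6 * (a7 * a8) * a3 := by simp only [mul_assoc]
      _ = a6 * a9 * a3 := by rw [h3.1]
      _ = a3 * a3 := by rw [v3.2.2.1]
      _ = 1 := i3
  have hinv : (a1 * a5)⁻¹ = a1 * a5 := inv_eq_of_mul_eq_one_right key
  calc a1 * a5 = (a1 * a5)⁻¹ := hinv.symm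
    _ = a5⁻¹ * a1⁻¹ := mul_inv_rev a1 a5
    _ = a5 * a1 := by rw [inv_eq_of_mul_eq_one_right i5, inv_eq_of_mul_eq_one_right i1]

/-! ### Auxiliary geometric lemmas -/

namespace SlimPLS

variable {P : Type*} {S : SlimPLS P}

theorem Collinear.symm' {x y : P} (h : S.Collinear x y) : S.Collinear y x :=
  ⟨Ne.symm h.1, h.2.elim fun l hl => ⟨l, hl.1, hl.2.2, hl.2.1⟩⟩

theorem col_of_mem {l : Finset P} (hl : l ∈ S.lines) {x y : P}
    (hx : x ∈ l) (hy : y ∈ l) (h : x ≠ y) : S.Collinear x y :=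
  ⟨h, l, hl, hx, hy⟩

/-- A line has a third point besides any two of its points. -/
theorem third_point {l : Finset P} (hl : l ∈ S.lines) {x y : P}
    (hx : x ∈ l) (hy : y ∈ l) (hxy : x ≠ y) :
    ∃ z ∈ l, z ≠ x ∧ z ≠ y := by
  by_contra h
  push_neg at h
  have hsub : l ⊆ ({x, y} : Finset P) := by
    intro z hz
    rcases eq_or_ne z x with rfl | hzx
    · exact Finset.mem_insert_self _ _
    · have := h z hz hzx
      subst this
      exact Finset.mem_insert_of_mem (Finset.mem_singleton_self _)
  have hcard := S.three_points l hl
  have : l.card ≤ 2 := le_trans (Finset.card_le_card hsub)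
    (le_trans (Finset.card_insert_le x {y}) (by simp))
  omega

/-- The points of a line are exactly three given distinct points of it. -/
theorem mem_line_eq {l : Finset P} (hl : l ∈ S.lines) {a b c : P}
    (ha : a ∈ l) (hb : b ∈ l) (hc : c ∈ l)
    (hab : a ≠ b) (hac : a ≠ c) (hbc : b ≠ c) {u : P} (hu : u ∈ l) :
    u = a ∨ u = b ∨ u = c := by
  have hsub : ({a, b, c} : Finset P) ⊆ l := by
    intro z hz
    simp only [Finset.mem_insert, Finset.mem_singleton] at hz
    rcases hz with rfl | rfl | rfl <;> assumption
  have hcard3 : ({a, b, c} : Finset P).card = 3 := by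
    rw [Finset.card_insert_of_notMem (by simp [hab, hac]),
      Finset.card_insert_of_notMem (by simp [hbc]), Finset.card_singleton]
  have heq : ({a, b, c} : Finset P) = l :=
    Finset.eq_of_subset_of_card_le hsub (by rw [S.three_points l hl, hcard3])
  rw [← heq] at hu
  simpa using hu

/-- Uniqueness tool: if `x ∉ l` is collinear with `u ∈ l`, it is not collinear
with any other point of `l`. -/
theorem not_col_of_col {l : Finset P}
    (hax : ∀ x : P, ∀ l ∈ S.lines, x ∉ l → ∃! y : P, y ∈ l ∧ S.Collinear x y)
    {x : P} (hl : l ∈ S.lines) (hxl : x ∉ l) {u v : P}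
    (hu : u ∈ l) (hv : v ∈ l) (huv : u ≠ v) (hcu : S.Collinear x u) :
    ¬ S.Collinear x v := by
  intro hcv
  obtain ⟨w, _, hw⟩ := hax x l hl hxl
  exact huv ((hw u ⟨hu, hcu⟩).trans (hw v ⟨hv, hcv⟩).symm)

/-- In a `(2,t)`-GQ, every point is on at least two lines. -/
theorem two_lines_through {t : ℕ} (hGQ : S.IsGQ t) (y : P) :
    ∃ l m : Finset P, l ∈ S.lines ∧ m ∈ S.lines ∧ y ∈ l ∧ y ∈ m ∧ l ≠ m := by
  obtain ⟨-, hnoall, hlines, hax⟩ := hGQ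
  have hc := hlines y
  have hfin : {l | l ∈ S.lines ∧ y ∈ l}.Finite :=
    Set.finite_of_ncard_ne_zero (by rw [hc]; omega)
  rcases Nat.eq_zero_or_pos t with rfl | ht
  · -- t = 0 : derive a contradiction
    exfalso
    obtain ⟨q, hqy, hqncol⟩ := hnoall y
    obtain ⟨l, hl, hyl⟩ : ∃ l, l ∈ S.lines ∧ y ∈ l := by
      have : {l | l ∈ S.lines ∧ y ∈ l}.Nonempty :=
        Set.nonempty_of_ncard_ne_zero (by rw [hc]; omega)
      exact this
    have hql : q ∉ l := fun h => hqncol (col_of_mem hl hyl h (Ne.symm hqy))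
    obtain ⟨z, ⟨hzl, hcz⟩, -⟩ := hax q l hl hql
    obtain ⟨hqz, m, hm, hqm, hzm⟩ := hcz
    have hlm : l ≠ m := fun h => hql (h ▸ hqm)
    have hz := hlines z
    obtain ⟨a, ha⟩ := Set.ncard_eq_one.1 hz
    have h1 : l = a := by
      have : l ∈ {l' | l' ∈ S.lines ∧ z ∈ l'} := ⟨hl, hzl⟩
      rw [ha] at this; exact this
    have h2 : m = a := by
      have : m ∈ {l' | l' ∈ S.lines ∧ z ∈ l'} := ⟨hm, hzm⟩
      rw [ha] at this; exact this
    exact hlm (h1.trans h2.symm)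
  · have h2 : 1 < {l | l ∈ S.lines ∧ y ∈ l}.ncard := by omega
    obtain ⟨l, hl, m, hm, hlm⟩ := (Set.one_lt_ncard hfin).1 h2
    exact ⟨l, m, hl.1, hm.1, hl.2, hm.2, hlm⟩

/-- The main geometric step: the involutions of two noncollinear points of a
`(2,t)`-GQ commute in any representation. -/
theorem rep_comm_of_noncol {t : ℕ} (hGQ : S.IsGQ t) {R : Type*} [Group R]
    (ρ : S.Rep R) {x y : P} (hxy : x ≠ y) (hncol : ¬ S.Collinear x y) :
    ρ.r x * ρ.r y = ρ.r y * ρ.r x := by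
  have hax := hGQ.2.2.2
  have inv_gen : ∀ p : P, ρ.r p * ρ.r p = 1 := by
    intro p
    have h := pow_orderOf_eq_one (ρ.r p)
    rw [ρ.order_two, pow_two] at h
    exact h
  have mkK : ∀ l ∈ S.lines, ∀ p ∈ l, ∀ q ∈ l, ∀ r ∈ l, p ≠ q → p ≠ r → q ≠ r →
      GK (ρ.r p) (ρ.r q) (ρ.r r) := fun l hl p hp q hq r hr hpq hpr hqr =>
    ⟨ρ.line_rel l hl p hp q hq r hr hpq hpr hqr,
     ρ.line_rel l hl q hq p hp r hr hpq.symm hqr hpr,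
     ρ.line_rel l hl q hq r hr p hp hqr hpq.symm hpr.symm,
     ρ.line_rel l hl r hr q hq p hp hqr.symm hpr.symm hpq.symm,
     ρ.line_rel l hl p hp r hr q hq hpr hpq hqr.symm,
     ρ.line_rel l hl r hr p hp q hq hpr.symm hqr.symm hpq⟩
  -- two lines through y
  obtain ⟨m0, m1, hm0, hm1, hym0, hym1, hm01⟩ := two_lines_through hGQ y
  have hxm0 : x ∉ m0 := fun h => hncol (col_of_mem hm0 h hym0 hxy)
  have hxm1 : x ∉ m1 := fun h => hncol (col_of_mem hm1 h hym1 hxy)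
  -- common neighbours z0, z1
  obtain ⟨z0, ⟨hz0m0, hcxz0⟩, -⟩ := hax x m0 hm0 hxm0
  obtain ⟨z1, ⟨hz1m1, hcxz1⟩, -⟩ := hax x m1 hm1 hxm1
  have hz0y : z0 ≠ y := fun h => hncol (h ▸ hcxz0)
  have hz1y : z1 ≠ y := fun h => hncol (h ▸ hcxz1)
  have hz01 : z0 ≠ z1 := by
    intro h
    exact hm01 (S.unique_line m0 hm0 m1 hm1 z0 y hz0y hz0m0 hym0 (h ▸ hz1m1) hym1)
  -- third points b0 ∈ m0, b1 ∈ m1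
  obtain ⟨b0, hb0m0, hb0z0, hb0y⟩ := third_point hm0 hz0m0 hym0 hz0y
  obtain ⟨b1, hb1m1, hb1z1, hb1y⟩ := third_point hm1 hz1m1 hym1 hz1y
  -- lines l0 = xz0, l1 = xz1 and third points a0, a1
  obtain ⟨hxz0, l0, hl0, hxl0, hz0l0⟩ := hcxz0
  obtain ⟨hxz1, l1, hl1, hxl1, hz1l1⟩ := hcxz1
  obtain ⟨a0, ha0l0, ha0x, ha0z0⟩ := third_point hl0 hxl0 hz0l0 hxz0
  obtain ⟨a1, ha1l1, ha1x, ha1z1⟩ := third_point hl1 hxl1 hz1l1 hxz1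
  have hyl0 : y ∉ l0 := fun h => hncol (col_of_mem hl0 hxl0 h hxy)
  have hyl1 : y ∉ l1 := fun h => hncol (col_of_mem hl1 hxl1 h hxy)
  have hcyz0 : S.Collinear y z0 := col_of_mem hm0 hym0 hz0m0 hz0y.symm
  have hcyz1 : S.Collinear y z1 := col_of_mem hm1 hym1 hz1m1 hz1y.symm
  have hl01 : l0 ≠ l1 := by
    intro h
    have hz1l0 : z1 ∈ l0 := h ▸ hz1l1
    exact (not_col_of_col hax hl0 hyl0 hz0l0 hz1l0 hz01 hcyz0) hcyz1
  have ha0l1 : a0 ∉ l1 := fun h =>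
    hl01 (S.unique_line l0 hl0 l1 hl1 x a0 ha0x.symm hxl0 ha0l0 hxl1 h)
  have hca0x : S.Collinear a0 x := col_of_mem hl0 ha0l0 hxl0 ha0x
  have hcxa0 : S.Collinear x a0 := hca0x.symm'
  -- F2
  have hnc_a0z1 : ¬ S.Collinear a0 z1 :=
    not_col_of_col hax hl1 ha0l1 hxl1 hz1l1 hxz1 hca0x
  have ha0z1 : a0 ≠ z1 := fun h => ha0l1 (h ▸ hz1l1)
  -- F3
  have hnc_ya0 : ¬ S.Collinear y a0 :=
    not_col_of_col hax hl0 hyl0 hz0l0 ha0l0 ha0z0.symm hcyz0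
  have hya0 : y ≠ a0 := fun h => hyl0 (h ▸ ha0l0)
  -- F4
  have hcxz1' : S.Collinear x z1 := col_of_mem hl1 hxl1 hz1l1 hxz1
  have hnc_xb1 : ¬ S.Collinear x b1 :=
    not_col_of_col hax hm1 hxm1 hz1m1 hb1m1 hb1z1.symm hcxz1'
  have hxb1 : x ≠ b1 := fun h => hxm1 (h ▸ hb1m1)
  -- F5 : a0 ∼ b1
  have ha0m1 : a0 ∉ m1 := by
    intro h
    rcases mem_line_eq hm1 hz1m1 hym1 hb1m1 hz1y (hb1z1.symm : z1 ≠ b1)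
      (hb1y.symm : y ≠ b1) h with h' | h' | h'
    · exact ha0z1 h'
    · exact hya0 h'.symm
    · exact hnc_xb1 (h' ▸ hcxa0)
  have hca0b1 : S.Collinear a0 b1 := by
    obtain ⟨u, ⟨hum1, hcu⟩, -⟩ := hax a0 m1 hm1 ha0m1
    rcases mem_line_eq hm1 hz1m1 hym1 hb1m1 hz1y (hb1z1.symm : z1 ≠ b1)
      (hb1y.symm : y ≠ b1) hum1 with rfl | rfl | rfl
    · exact absurd hcu hnc_a0z1
    · exact absurd hcu.symm' hnc_ya0
    · exact hcu
  -- line n = a0 b1 and third point e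
  obtain ⟨ha0b1, n, hn, ha0n, hb1n⟩ := hca0b1
  obtain ⟨e, hen, hea0, heb1⟩ := third_point hn ha0n hb1n ha0b1
  -- F7 preliminaries
  have hz1m0 : z1 ∉ m0 := fun h =>
    hm01 (S.unique_line m0 hm0 m1 hm1 z1 y hz1y h hym0 hz1m1 hym1)
  have hcz1y : S.Collinear z1 y := col_of_mem hm1 hz1m1 hym1 hz1y
  have hnc_z1b0 : ¬ S.Collinear z1 b0 :=
    not_col_of_col hax hm0 hz1m0 hym0 hb0m0 hb0y.symm hcz1y
  have hcxz0' : S.Collinear x z0 := col_of_mem hl0 hxl0 hz0l0 hxz0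
  have hnc_xb0 : ¬ S.Collinear x b0 :=
    not_col_of_col hax hm0 hxm0 hz0m0 hb0m0 hb0z0.symm hcxz0'
  have hxb0 : x ≠ b0 := fun h => hxm0 (h ▸ hb0m0)
  have hcxa1 : S.Collinear x a1 := col_of_mem hl1 hxl1 ha1l1 ha1x.symm
  -- F7 : a1 ∼ b0
  have hb0l1 : b0 ∉ l1 := by
    intro h
    rcases mem_line_eq hl1 hxl1 hz1l1 ha1l1 hxz1 (ha1x.symm : x ≠ a1)
      (ha1z1.symm : z1 ≠ a1) h with h' | h' | h'
    · exact hxb0 h'.symm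
    · exact hz1m0 (h' ▸ hb0m0)
    · exact hnc_xb0 (h' ▸ hcxa1)
  have hca1b0 : S.Collinear a1 b0 := by
    obtain ⟨u, ⟨hul1, hcu⟩, -⟩ := hax b0 l1 hl1 hb0l1
    rcases mem_line_eq hl1 hxl1 hz1l1 ha1l1 hxz1 (ha1x.symm : x ≠ a1)
      (ha1z1.symm : z1 ≠ a1) hul1 with rfl | rfl | rfl
    · exact absurd hcu.symm' hnc_xb0
    · exact absurd hcu.symm' hnc_z1b0
    · exact hcu.symm'
  obtain ⟨ha1b0, n', hn', ha1n', hb0n'⟩ := hca1b0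
  -- noncollinearity of e with x, y, z0, z1
  have hxn : x ∉ n := fun h => hnc_xb1 (col_of_mem hn h hb1n hxb1)
  have hnc_xe : ¬ S.Collinear x e :=
    not_col_of_col hax hn hxn ha0n hen hea0.symm hcxa0
  have hxe : x ≠ e := fun h => hxn (h ▸ hen)
  have hyn : y ∉ n := fun h => hnc_ya0 (col_of_mem hn h ha0n hya0)
  have hcyb1 : S.Collinear y b1 := col_of_mem hm1 hym1 hb1m1 hb1y.symm
  have hnc_ye : ¬ S.Collinear y e :=
    not_col_of_col hax hn hyn hb1n hen heb1.symm hcyb1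
  have hye : y ≠ e := fun h => hyn (h ▸ hen)
  have hz1n : z1 ∉ n := by
    intro h
    have : n = m1 := S.unique_line n hn m1 hm1 z1 b1 hb1z1.symm h hb1n hz1m1 hb1m1
    exact ha0m1 (this ▸ ha0n)
  have hcz1b1 : S.Collinear z1 b1 := col_of_mem hm1 hz1m1 hb1m1 hb1z1.symm
  have hnc_z1e : ¬ S.Collinear z1 e :=
    not_col_of_col hax hn hz1n hb1n hen heb1.symm hcz1b1
  have hz0n : z0 ∉ n := by
    intro h
    have : n = l0 := S.unique_line n hn l0 hl0 z0 a0 ha0z0.symm h ha0n hz0l0 ha0l0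
    have hb1l0 : b1 ∈ l0 := this ▸ hb1n
    exact hnc_xb1 (col_of_mem hl0 hxl0 hb1l0 hxb1)
  have hcz0a0 : S.Collinear z0 a0 := col_of_mem hl0 hz0l0 ha0l0 ha0z0.symm
  have hnc_z0e : ¬ S.Collinear z0 e :=
    not_col_of_col hax hn hz0n ha0n hen hea0.symm hcz0a0
  have hz1e : z1 ≠ e := fun h => hz1n (h ▸ hen)
  have hz0e : z0 ≠ e := fun h => hz0n (h ▸ hen)
  -- e ∼ a1
  have hea1 : e ≠ a1 := fun h => hnc_xe (h ▸ hcxa1)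
  have hel1 : e ∉ l1 := by
    intro h
    rcases mem_line_eq hl1 hxl1 hz1l1 ha1l1 hxz1 (ha1x.symm : x ≠ a1)
      (ha1z1.symm : z1 ≠ a1) h with h' | h' | h'
    · exact hxe h'.symm
    · exact hz1e h'.symm
    · exact hea1 h'
  have hcea1 : S.Collinear e a1 := by
    obtain ⟨u, ⟨hul1, hcu⟩, -⟩ := hax e l1 hl1 hel1
    rcases mem_line_eq hl1 hxl1 hz1l1 ha1l1 hxz1 (ha1x.symm : x ≠ a1)
      (ha1z1.symm : z1 ≠ a1) hul1 with rfl | rfl | rfl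
    · exact absurd hcu.symm' hnc_xe
    · exact absurd hcu.symm' hnc_z1e
    · exact hcu
  -- e ∼ b0
  have hcyb0 : S.Collinear y b0 := col_of_mem hm0 hym0 hb0m0 hb0y.symm
  have heb0 : e ≠ b0 := fun h => hnc_ye (h ▸ hcyb0)
  have hem0 : e ∉ m0 := by
    intro h
    rcases mem_line_eq hm0 hz0m0 hym0 hb0m0 hz0y (hb0z0.symm : z0 ≠ b0)
      (hb0y.symm : y ≠ b0) h with h' | h' | h'
    · exact hz0e h'.symm
    · exact hye h'.symm
    · exact heb0 h'
  have hceb0 : S.Collinear e b0 := by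
    obtain ⟨u, ⟨hum0, hcu⟩, -⟩ := hax e m0 hm0 hem0
    rcases mem_line_eq hm0 hz0m0 hym0 hb0m0 hz0y (hb0z0.symm : z0 ≠ b0)
      (hb0y.symm : y ≠ b0) hum0 with rfl | rfl | rfl
    · exact absurd hcu.symm' hnc_z0e
    · exact absurd hcu.symm' hnc_ye
    · exact hcu
  -- e ∈ n'
  have hen' : e ∈ n' := by
    by_contra h
    obtain ⟨w, -, hw⟩ := hax e n' hn' h
    exact ha1b0 ((hw a1 ⟨ha1n', hcea1⟩).trans (hw b0 ⟨hb0n', hceb0⟩).symm)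
  -- assemble the grid and conclude
  exact gridComm (ρ.r x) (ρ.r z0) (ρ.r a0) (ρ.r z1) (ρ.r y) (ρ.r b1)
    (ρ.r a1) (ρ.r b0) (ρ.r e)
    (mkK l0 hl0 x hxl0 z0 hz0l0 a0 ha0l0 hxz0 ha0x.symm ha0z0.symm)
    (mkK m1 hm1 z1 hz1m1 y hym1 b1 hb1m1 hz1y hb1z1.symm hb1y.symm)
    (mkK n' hn' a1 ha1n' b0 hb0n' e hen' ha1b0 hea1.symm heb0.symm)
    (mkK l1 hl1 x hxl1 z1 hz1l1 a1 ha1l1 hxz1 ha1x.symm ha1z1.symm)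
    (mkK m0 hm0 z0 hz0m0 y hym0 b0 hb0m0 hz0y hb0z0.symm hb0y.symm)
    (mkK n hn a0 ha0n b1 hb1n e hen ha0b1 hea0.symm heb1.symm)
    (inv_gen x) (inv_gen a0) (inv_gen y) (inv_gen b0)

end SlimPLS

end GQRepAux

/-- If `S` is a `(2,t)`-GQ and `(R, ψ)` is a representation of `S`
(not necessarily faithful), then `R` is an elementary abelian 2-group. -/
theorem gq_rep_elementary_abelian {P : Type*} (S : SlimPLS P) {t : ℕ}
    (hGQ : S.IsGQ t) {R : Type*} [Group R] (ρ : S.Rep R) :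
    (∀ a b : R, a * b = b * a) ∧ (∀ a : R, a * a = 1) := by
  have inv_gen : ∀ p : P, ρ.r p * ρ.r p = 1 := by
    intro p
    have h := pow_orderOf_eq_one (ρ.r p)
    rw [ρ.order_two, pow_two] at h
    exact h
  have comm_gen : ∀ p q : P, ρ.r p * ρ.r q = ρ.r q * ρ.r p := by
    intro p q
    rcases eq_or_ne p q with rfl | hpq
    · rfl
    by_cases hcol : S.Collinear p q
    · obtain ⟨hne, l, hl, hp, hq⟩ := hcol
      obtain ⟨w, hw, hwp, hwq⟩ := SlimPLS.third_point hl hp hq hne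
      have h1 := ρ.line_rel l hl p hp q hq w hw hne hwp.symm hwq.symm
      have h2 := ρ.line_rel l hl q hq p hp w hw hne.symm hwq.symm hwp.symm
      exact h1.trans h2.symm
    · exact SlimPLS.rep_comm_of_noncol hGQ ρ hpq hcol
  have hcomm : ∀ a b : R, a * b = b * a := by
    have step1 : ∀ p : P, ∀ b : R, ρ.r p * b = b * ρ.r p := by
      intro p b
      have hb : b ∈ Subgroup.closure (Set.range ρ.r) := by
        rw [ρ.gen]; exact Subgroup.mem_top b
      have hle : Subgroup.closure (Set.range ρ.r) ≤ Subgroup.centralizer {ρ.r p} := by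
        rw [Subgroup.closure_le]
        rintro g ⟨q, rfl⟩
        rw [SetLike.mem_coe, Subgroup.mem_centralizer_iff]
        rintro h hh
        rw [Set.mem_singleton_iff] at hh
        subst hh
        exact comm_gen p q
      exact Subgroup.mem_centralizer_iff.1 (hle hb) _ rfl
    intro a b
    have ha : a ∈ Subgroup.closure (Set.range ρ.r) := by
      rw [ρ.gen]; exact Subgroup.mem_top a
    have hle : Subgroup.closure (Set.range ρ.r) ≤ Subgroup.centralizer {b} := by
      rw [Subgroup.closure_le]
      rintro g ⟨q, rfl⟩
      rw [SetLike.mem_coe, Subgroup.mem_centralizer_iff]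
      rintro h hh
      rw [Set.mem_singleton_iff] at hh
      rw [hh]
      exact (step1 q b).symm
    exact (Subgroup.mem_centralizer_iff.1 (hle ha) _ rfl).symm
  refine ⟨hcomm, ?_⟩
  intro a
  let T : Subgroup R :=
    { carrier := {g | g * g = 1}
      one_mem' := mul_one 1
      mul_mem' := by
        intro g h hg hh
        simp only [Set.mem_setOf_eq] at hg hh ⊢
        calc g * h * (g * h) = g * ((h * g) * h) := by simp only [mul_assoc]
          _ = g * ((g * h) * h) := by rw [hcomm h g]
          _ = (g * g) * (h * h) := by simp only [mul_assoc]
          _ = 1 := by rw [hg, hh, one_mul]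
      inv_mem' := by
        intro g hg
        simp only [Set.mem_setOf_eq] at hg ⊢
        rw [← mul_inv_rev, hg, inv_one] }
  have ha : a ∈ Subgroup.closure (Set.range ρ.r) := by
    rw [ρ.gen]; exact Subgroup.mem_top a
  have hle : Subgroup.closure (Set.range ρ.r) ≤ T := by
    rw [Subgroup.closure_le]
    rintro g ⟨q, rfl⟩
    exact inv_gen q
  exact hle ha
end

section
/- Let S = (P, L) be a generalized quadrangle of order (2,1) and let (R, ψ) be a faithful representation of S. Then |R| = 2^4. -/
open scoped Classical

section Helpers

variable {P : Type*} {S : SlimPLS P}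

lemma gq_col_symm {x y : P} (h : S.Collinear x y) : S.Collinear y x :=
  ⟨h.1.symm, h.2.elim fun l hl => ⟨l, hl.1, hl.2.2, hl.2.1⟩⟩

lemma gq_col_of_line {l : Finset P} (hl : l ∈ S.lines) {p q : P}
    (hp : p ∈ l) (hq : q ∈ l) (hpq : p ≠ q) : S.Collinear p q :=
  ⟨hpq, l, hl, hp, hq⟩

lemma gq_third {l : Finset P} (hl : l ∈ S.lines) {p q : P}
    (hp : p ∈ l) (hq : q ∈ l) (hpq : p ≠ q) :
    ∃ z, z ∈ l ∧ z ≠ p ∧ z ≠ q ∧ l = {p, q, z} := by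
  have h3 := S.three_points l hl
  have hsub : ({p, q} : Finset P) ⊆ l := by
    simp [Finset.insert_subset_iff, hp, hq]
  have hc1 : (l \ {p, q}).card = 1 := by
    rw [Finset.card_sdiff_of_subset hsub, h3, Finset.card_pair hpq]
  obtain ⟨z, hz⟩ := Finset.card_eq_one.mp hc1
  have hzm : z ∈ l \ ({p, q} : Finset P) := by
    rw [hz]; exact Finset.mem_singleton_self z
  rw [Finset.mem_sdiff, Finset.mem_insert, Finset.mem_singleton] at hzm
  obtain ⟨hzl, hzpq⟩ := hzm
  push_neg at hzpq
  refine ⟨z, hzl, hzpq.1, hzpq.2, ?_⟩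
  have hsub2 : ({p, q, z} : Finset P) ⊆ l := by
    simp [Finset.insert_subset_iff, hp, hq, hzl]
  have hc3 : ({p, q, z} : Finset P).card = 3 := by
    rw [Finset.card_insert_of_notMem (by simp [hpq, Ne.symm hzpq.1]),
      Finset.card_pair (Ne.symm hzpq.2)]
  exact (Finset.eq_of_subset_of_card_le hsub2 (by rw [h3, hc3])).symm

lemma gq_two_others {l : Finset P} (hl : l ∈ S.lines) {x : P} (hx : x ∈ l) :
    ∃ a b, a ∈ l ∧ b ∈ l ∧ x ≠ a ∧ x ≠ b ∧ a ≠ b ∧ l = {x, a, b} := by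
  have hc2 : (l.erase x).card = 2 := by
    rw [Finset.card_erase_of_mem hx, S.three_points l hl]
  obtain ⟨a, b, hab, he⟩ := Finset.card_eq_two.mp hc2
  have ha : a ∈ l.erase x := by rw [he]; simp
  have hb : b ∈ l.erase x := by rw [he]; simp
  refine ⟨a, b, Finset.mem_of_mem_erase ha, Finset.mem_of_mem_erase hb,
    (Finset.ne_of_mem_erase ha).symm, (Finset.ne_of_mem_erase hb).symm, hab, ?_⟩
  rw [← Finset.insert_erase hx, he]

end Helpers



abbrev V4 : Type := ZMod 2 × ZMod 2 × ZMod 2 × ZMod 2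

def quadF {R : Type*} [Group R] (u v w k : R) (s : V4) : R :=
  (u ^ s.1.val * v ^ s.2.1.val) * (w ^ s.2.2.1.val * k ^ s.2.2.2.val)

section quad
variable {R : Type*} [Group R] {u v w k : R}
  (cuv : Commute u v) (cuw : Commute u w) (cuk : Commute u k)
  (cvw : Commute v w) (cvk : Commute v k) (cwk : Commute w k)
  (hu : u * u = 1) (hv : v * v = 1) (hw : w * w = 1) (hk : k * k = 1)

lemma pow_val_add {g : R} (hg : g * g = 1) (i j : ZMod 2) :
    g ^ (i + j).val = g ^ i.val * g ^ j.val := by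
  have h2 : g ^ 2 = 1 := by rw [pow_two, hg]
  have hmod : ∀ n : ℕ, g ^ (n % 2) = g ^ n := by
    intro n
    conv_rhs => rw [← Nat.div_add_mod n 2]
    rw [pow_add, pow_mul, h2, one_pow, one_mul]
  rw [ZMod.val_add, hmod, pow_add]

include cuv cuw cuk cvw cvk cwk hu hv hw hk in
lemma quadF_mul (s t : V4) :
    quadF u v w k s * quadF u v w k t = quadF u v w k (s + t) := by
  obtain ⟨i1, j1, k1, n1⟩ := s
  obtain ⟨i2, j2, k2, n2⟩ := t
  show (u ^ i1.val * v ^ j1.val) * (w ^ k1.val * k ^ n1.val) *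
      ((u ^ i2.val * v ^ j2.val) * (w ^ k2.val * k ^ n2.val)) =
    (u ^ (i1 + i2).val * v ^ (j1 + j2).val) *
      (w ^ (k1 + k2).val * k ^ (n1 + n2).val)
  have hmid : Commute (w ^ k1.val * k ^ n1.val) (u ^ i2.val * v ^ j2.val) :=
    Commute.mul_left
      (Commute.mul_right (cuw.symm.pow_pow _ _) (cvw.symm.pow_pow _ _))
      (Commute.mul_right (cuk.symm.pow_pow _ _) (cvk.symm.pow_pow _ _))
  rw [hmid.mul_mul_mul_comm,
    ((cuv.symm.pow_pow j1.val i2.val).mul_mul_mul_comm _ _),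
    ((cwk.symm.pow_pow n1.val k2.val).mul_mul_mul_comm _ _),
    ← pow_add, ← pow_add, ← pow_add, ← pow_add,
    pow_val_add hu, pow_val_add hv, pow_val_add hw, pow_val_add hk,
    pow_add, pow_add, pow_add, pow_add]

include cuv cuw cuk cvw cvk cwk hu hv hw hk in
lemma quadF_bij (hgen : Subgroup.closure ({u, v, w, k} : Set R) = ⊤)
    (hker : ∀ s : V4, quadF u v w k s = 1 → s = 0) :
    Function.Bijective (quadF u v w k) := by
  have hF := quadF_mul (u := u) (v := v) (w := w) (k := k)
    cuv cuw cuk cvw cvk cwk hu hv hw hk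
  have haddself : ∀ s : V4, s + s = 0 := by
    have h2 : ∀ i : ZMod 2, i + i = 0 := by decide
    rintro ⟨i, j, k, n⟩
    simp [Prod.ext_iff, h2]
  have hF0 : quadF u v w k 0 = 1 := by
    simp [quadF, ZMod.val_zero]
  constructor
  · intro s t hst
    have h1 : quadF u v w k (s + t) = 1 := by
      rw [← hF, hst, hF, haddself, hF0]
    have h2 := hker _ h1
    have : s = s + t + t := by rw [add_assoc, haddself, add_zero]
    rw [this, h2, zero_add]
  · -- surjective
    set H : Subgroup R :=
      { carrier := Set.range (quadF u v w k)
        one_mem' := ⟨0, hF0⟩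
        mul_mem' := by
          rintro a b ⟨s, rfl⟩ ⟨t, rfl⟩
          exact ⟨s + t, (hF s t).symm⟩
        inv_mem' := by
          rintro a ⟨s, rfl⟩
          have : quadF u v w k s * quadF u v w k s = 1 := by
            rw [hF, haddself, hF0]
          exact ⟨s, (inv_eq_of_mul_eq_one_right this).symm⟩ } with hHdef
    have hH : (H : Set R) = Set.range (quadF u v w k) := rfl
    have hmem : ({u, v, w, k} : Set R) ⊆ ↑H := by
      rw [hH]
      have val1 : (1 : ZMod 2).val = 1 := rfl
      rintro a (rfl | rfl | rfl | rfl)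
      · exact ⟨(1, 0, 0, 0), by simp [quadF, val1]⟩
      · exact ⟨(0, 1, 0, 0), by simp [quadF, val1]⟩
      · exact ⟨(0, 0, 1, 0), by simp [quadF, val1]⟩
      · exact ⟨(0, 0, 0, 1), by simp [quadF, val1]⟩
    have : (⊤ : Subgroup R) ≤ H := by
      rw [← hgen]; exact Subgroup.closure_le H |>.mpr hmem
    intro g
    exact this (Subgroup.mem_top g)

end quad


/-- A faithful representation group of the `(2,1)`-GQ has order `2^4`. -/
theorem gq21_faithful_rep_card {P : Type*} (S : SlimPLS P)
    (hGQ : S.IsGQ 1) {R : Type*} [Group R] (ρ : S.Rep R)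
    (hf : Function.Injective ρ.r) :
    Nat.card R = 2 ^ 4 := by
  classical
  obtain ⟨hconn, hnc, hncard, hax⟩ := hGQ
  obtain ⟨x⟩ := S.nonempty_pts
  -- basic helpers
  have pigeon : ∀ (p : P) {la lb : Finset P}, la ∈ S.lines → p ∈ la →
      lb ∈ S.lines → p ∈ lb → la ≠ lb →
      ∀ l ∈ S.lines, p ∈ l → l = la ∨ l = lb := by
    intro p la lb hla hpa hlb hpb hab l hl hpl
    obtain ⟨s, t, hst, hT⟩ := Set.ncard_eq_two.mp (hncard p)
    have h1 : la ∈ ({s, t} : Set (Finset P)) := hT ▸ (⟨hla, hpa⟩ :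
      la ∈ {l | l ∈ S.lines ∧ p ∈ l})
    have h2 : lb ∈ ({s, t} : Set (Finset P)) := hT ▸ (⟨hlb, hpb⟩ :
      lb ∈ {l | l ∈ S.lines ∧ p ∈ l})
    have h3 : l ∈ ({s, t} : Set (Finset P)) := hT ▸ (⟨hl, hpl⟩ :
      l ∈ {l | l ∈ S.lines ∧ p ∈ l})
    simp only [Set.mem_insert_iff, Set.mem_singleton_iff] at h1 h2 h3
    rcases h3 with rfl | rfl <;> rcases h1 with rfl | rfl <;>
      rcases h2 with rfl | rfl <;> tauto
  have uniqCol : ∀ (p : P) {l : Finset P}, l ∈ S.lines → p ∉ l →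
      ∀ {q1 q2 : P}, q1 ∈ l → q2 ∈ l → S.Collinear p q1 → S.Collinear p q2 →
      q1 = q2 := by
    intro p l hl hpl q1 q2 h1 h2 hc1 hc2
    obtain ⟨zz, _, hz⟩ := hax p l hl hpl
    rw [hz q1 ⟨h1, hc1⟩, hz q2 ⟨h2, hc2⟩]
  -- the two lines through x
  obtain ⟨y, hyx, hnxy⟩ := hnc x
  have hxy_ne : x ≠ y := hyx.symm
  have hnyx : ¬S.Collinear y x := fun h => hnxy (gq_col_symm h)
  obtain ⟨l1, l2, hl12, hTx⟩ := Set.ncard_eq_two.mp (hncard x)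
  have hl1 : l1 ∈ S.lines ∧ x ∈ l1 := by
    have : l1 ∈ ({l1, l2} : Set (Finset P)) := by simp
    rw [← hTx] at this; exact this
  have hl2 : l2 ∈ S.lines ∧ x ∈ l2 := by
    have : l2 ∈ ({l1, l2} : Set (Finset P)) := by simp
    rw [← hTx] at this; exact this
  have hy_l1 : y ∉ l1 := fun h => hnxy ⟨hxy_ne, l1, hl1.1, hl1.2, h⟩
  have hy_l2 : y ∉ l2 := fun h => hnxy ⟨hxy_ne, l2, hl2.1, hl2.2, h⟩
  -- points a, b on l1 with y ~ a
  have hstep1 : ∃ a b, a ∈ l1 ∧ b ∈ l1 ∧ x ≠ a ∧ x ≠ b ∧ a ≠ b ∧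
      l1 = {x, a, b} ∧ S.Collinear y a := by
    obtain ⟨a0, b0, ha0, hb0, hxa0, hxb0, hab0, hl1e⟩ := gq_two_others hl1.1 hl1.2
    obtain ⟨zz, ⟨hzl, hzc⟩, _⟩ := hax y l1 hl1.1 hy_l1
    have hzx : zz ≠ x := fun h => hnyx (h ▸ hzc)
    rw [hl1e] at hzl
    simp only [Finset.mem_insert, Finset.mem_singleton] at hzl
    rcases hzl with h | h | h
    · exact absurd h hzx
    · exact ⟨a0, b0, ha0, hb0, hxa0, hxb0, hab0, hl1e, h ▸ hzc⟩
    · exact ⟨b0, a0, hb0, ha0, hxb0, hxa0, hab0.symm,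
        by rw [hl1e, Finset.pair_comm a0 b0], h ▸ hzc⟩
  obtain ⟨a, b, hal1, hbl1, hxa, hxb, hab, hl1e, hya⟩ := hstep1
  -- points c, d on l2 with y ~ c
  have hstep2 : ∃ c d, c ∈ l2 ∧ d ∈ l2 ∧ x ≠ c ∧ x ≠ d ∧ c ≠ d ∧
      l2 = {x, c, d} ∧ S.Collinear y c := by
    obtain ⟨c0, d0, hc0, hd0, hxc0, hxd0, hcd0, hl2e⟩ := gq_two_others hl2.1 hl2.2
    obtain ⟨zz, ⟨hzl, hzc⟩, _⟩ := hax y l2 hl2.1 hy_l2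
    have hzx : zz ≠ x := fun h => hnyx (h ▸ hzc)
    rw [hl2e] at hzl
    simp only [Finset.mem_insert, Finset.mem_singleton] at hzl
    rcases hzl with h | h | h
    · exact absurd h hzx
    · exact ⟨c0, d0, hc0, hd0, hxc0, hxd0, hcd0, hl2e, h ▸ hzc⟩
    · exact ⟨d0, c0, hd0, hc0, hxd0, hxc0, hcd0.symm,
        by rw [hl2e, Finset.pair_comm c0 d0], h ▸ hzc⟩
  obtain ⟨c, d, hcl2, hdl2, hxc, hxd, hcd, hl2e, hyc⟩ := hstep2
  -- lines m (through y, a) and n (through y, c) with third points e, f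
  obtain ⟨m, hm, hym, ham⟩ := hya.2
  obtain ⟨e, hem, hey, hea, hme⟩ := gq_third hm hym ham hya.1
  obtain ⟨n, hn, hyn, hcn⟩ := hyc.2
  obtain ⟨f, hfn, hfy, hfc, hne⟩ := gq_third hn hyn hcn hyc.1
  -- cross facts
  have hcross : ∀ p, p ∈ l1 → p ∈ l2 → p = x := by
    intro p h1 h2
    by_contra hpx
    exact hl12 (S.unique_line l1 hl1.1 l2 hl2.1 x p
      (fun h => hpx h.symm) hl1.2 h1 hl2.2 h2)
  have hc_l1 : c ∉ l1 := fun h => hxc (hcross c h hcl2).symm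
  have hd_l1 : d ∉ l1 := fun h => hxd (hcross d h hdl2).symm
  have ha_l2 : a ∉ l2 := fun h => hxa (hcross a hal1 h).symm
  have hb_l2 : b ∉ l2 := fun h => hxb (hcross b hbl1 h).symm
  have hac : a ≠ c := fun h => ha_l2 (h ▸ hcl2)
  have had : a ≠ d := fun h => ha_l2 (h ▸ hdl2)
  have hbc : b ≠ c := fun h => hb_l2 (h ▸ hcl2)
  have hbd : b ≠ d := fun h => hb_l2 (h ▸ hdl2)
  have hyb : y ≠ b := fun h => hy_l1 (h ▸ hbl1)
  have hyd : y ≠ d := fun h => hy_l2 (h ▸ hdl2)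
  have hx_m : x ∉ m := fun h => hnxy ⟨hxy_ne, m, hm, h, hym⟩
  have hx_n : x ∉ n := fun h => hnxy ⟨hxy_ne, n, hn, h, hyn⟩
  -- points of l2 \ {x} are not collinear with points of l1 \ {x}
  have hn_cross : ∀ p, p ∈ l2 → p ≠ x → ∀ q, q ∈ l1 → q ≠ x →
      ¬S.Collinear p q := by
    intro p hp hpx q hq hqx h
    have hp_l1 : p ∉ l1 := fun hh => hpx (hcross p hh hp)
    have h1 : S.Collinear p x := gq_col_of_line hl2.1 hp hl2.2 hpx
    exact hqx (uniqCol p hl1.1 hp_l1 hq hl1.2 h h1)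
  have hmn : m ≠ n := by
    intro h
    exact hn_cross c hcl2 (Ne.symm hxc) a hal1 (Ne.symm hxa)
      (gq_col_of_line hm (h ▸ hcn) ham (Ne.symm hac))
  have hl1m : l1 ≠ m := fun h => hy_l1 (by rw [h]; exact hym)
  have hl2n : l2 ≠ n := fun h => hy_l2 (by rw [h]; exact hyn)
  have hb_m : b ∉ m := fun h => hy_l1
    (by rw [S.unique_line l1 hl1.1 m hm a b hab hal1 hbl1 ham h]; exact hym)
  have hc_m : c ∉ m := fun h => hmn
    (S.unique_line m hm n hn y c hyc.1 hym h hyn hcn)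
  have hd_m : d ∉ m := fun h => hn_cross d hdl2 (Ne.symm hxd) a hal1 (Ne.symm hxa)
    (gq_col_of_line hm h ham (Ne.symm had))
  have he_l1 : e ∉ l1 := by
    rw [hl1e]
    simp only [Finset.mem_insert, Finset.mem_singleton, not_or]
    exact ⟨fun h => hx_m (h ▸ hem), hea, fun h => hb_m (h ▸ hem)⟩
  have he_l2 : e ∉ l2 := by
    rw [hl2e]
    simp only [Finset.mem_insert, Finset.mem_singleton, not_or]
    exact ⟨fun h => hx_m (h ▸ hem), fun h => hc_m (h ▸ hem),
      fun h => hd_m (h ▸ hem)⟩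
  have hne_x : ¬S.Collinear e x := by
    rintro ⟨hex, l, hl, hel, hxl⟩
    rcases pigeon x hl1.1 hl1.2 hl2.1 hl2.2 hl12 l hl hxl with rfl | rfl
    · exact he_l1 hel
    · exact he_l2 hel
  have hf_m : f ∉ m := fun h => hmn
    (S.unique_line m hm n hn y f (Ne.symm hfy) hym h hyn hfn)
  have he_n : e ∉ n := by
    rw [hne]
    simp only [Finset.mem_insert, Finset.mem_singleton, not_or]
    exact ⟨hey, fun h => hc_m (h ▸ hem), fun h => hf_m (h ▸ hem)⟩
  have hne_c : ¬S.Collinear e c := by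
    rintro ⟨hec, l, hl, hel, hcl⟩
    rcases pigeon c hl2.1 hcl2 hn hcn hl2n l hl hcl with rfl | rfl
    · exact he_l2 hel
    · exact he_n hel
  -- e is collinear with d; line o with third point g
  have hed : S.Collinear e d := by
    obtain ⟨zz, ⟨hzl, hzc⟩, _⟩ := hax e l2 hl2.1 he_l2
    rw [hl2e] at hzl
    simp only [Finset.mem_insert, Finset.mem_singleton] at hzl
    rcases hzl with rfl | rfl | rfl
    · exact absurd hzc hne_x
    · exact absurd hzc hne_c
    · exact hzc
  obtain ⟨o, ho, heo, hdo⟩ := hed.2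
  obtain ⟨g, hgo, hgd, hge, hoe⟩ := gq_third ho hdo heo (Ne.symm hed.1)
  -- f is collinear with b
  have ha_n : a ∉ n := fun h => hmn
    (S.unique_line m hm n hn y a hya.1 hym ham hyn h)
  have hb_n : b ∉ n := fun h => hn_cross c hcl2 (Ne.symm hxc) b hbl1 (Ne.symm hxb)
    (gq_col_of_line hn hcn h (Ne.symm hbc))
  have hf_l1 : f ∉ l1 := by
    rw [hl1e]
    simp only [Finset.mem_insert, Finset.mem_singleton, not_or]
    exact ⟨fun h => hx_n (h ▸ hfn), fun h => ha_n (h ▸ hfn),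
      fun h => hb_n (h ▸ hfn)⟩
  have hd_n : d ∉ n := by
    intro h
    exact hcd (uniqCol y hl2.1 hy_l2 hcl2 hdl2 hyc
      (gq_col_of_line hn hyn h hyd))
  have hf_l2 : f ∉ l2 := by
    rw [hl2e]
    simp only [Finset.mem_insert, Finset.mem_singleton, not_or]
    exact ⟨fun h => hx_n (h ▸ hfn), hfc, fun h => hd_n (h ▸ hfn)⟩
  have hnf_x : ¬S.Collinear f x := by
    rintro ⟨hfx, l, hl, hfl, hxl⟩
    rcases pigeon x hl1.1 hl1.2 hl2.1 hl2.2 hl12 l hl hxl with rfl | rfl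
    · exact hf_l1 hfl
    · exact hf_l2 hfl
  have hnf_a : ¬S.Collinear f a := by
    rintro ⟨hfa, l, hl, hfl, hal⟩
    rcases pigeon a hl1.1 hal1 hm ham hl1m l hl hal with rfl | rfl
    · exact hf_l1 hfl
    · exact hf_m hfl
  have hfb : S.Collinear f b := by
    obtain ⟨zz, ⟨hzl, hzc⟩, _⟩ := hax f l1 hl1.1 hf_l1
    rw [hl1e] at hzl
    simp only [Finset.mem_insert, Finset.mem_singleton] at hzl
    rcases hzl with rfl | rfl | rfl
    · exact absurd hzc hnf_x
    · exact absurd hzc hnf_a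
    · exact hzc
  -- b is collinear with g
  have hnd_b : ¬S.Collinear d b := hn_cross d hdl2 (Ne.symm hxd) b hbl1 (Ne.symm hxb)
  have hb_o : b ∉ o := by
    rw [hoe]
    simp only [Finset.mem_insert, Finset.mem_singleton, not_or]
    refine ⟨hbd, fun h => he_l1 (by rw [← h]; exact hbl1), ?_⟩
    intro h
    exact hnd_b (gq_col_of_line ho hdo (by rw [h]; exact hgo) (Ne.symm hbd))
  have hm_o : m ≠ o := fun h => hd_m (by rw [h]; exact hdo)
  have hnb_e : ¬S.Collinear b e := by
    rintro ⟨hbe, l, hl, hbl, hel⟩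
    rcases pigeon e hm hem ho heo hm_o l hl hel with rfl | rfl
    · exact hb_m hbl
    · exact hb_o hbl
  have hbg : S.Collinear b g := by
    obtain ⟨zz, ⟨hzl, hzc⟩, _⟩ := hax b o ho hb_o
    rw [hoe] at hzl
    simp only [Finset.mem_insert, Finset.mem_singleton] at hzl
    rcases hzl with rfl | rfl | rfl
    · exact absurd (gq_col_symm hzc) hnd_b
    · exact absurd hzc hnb_e
    · exact hzc
  -- f is collinear with g
  have hnf_d : ¬S.Collinear f d := fun h => hcd
    (uniqCol f hl2.1 hf_l2 hcl2 hdl2 ⟨hfc, n, hn, hfn, hcn⟩ h)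
  have hnf_e : ¬S.Collinear f e := fun h => hey
    (uniqCol f hm hf_m hym hem ⟨hfy, n, hn, hfn, hyn⟩ h).symm
  have hfd : f ≠ d := fun h => hd_n (h ▸ hfn)
  have hfe_ne : f ≠ e := fun h => hf_m (by rw [h]; exact hem)
  have hf_o : f ∉ o := by
    rw [hoe]
    simp only [Finset.mem_insert, Finset.mem_singleton, not_or]
    refine ⟨hfd, hfe_ne, fun h => ?_⟩
    exact hnf_d (gq_col_of_line ho (by rw [h]; exact hgo) hdo hfd)
  have hfg : S.Collinear f g := by
    obtain ⟨zz, ⟨hzl, hzc⟩, _⟩ := hax f o ho hf_o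
    rw [hoe] at hzl
    simp only [Finset.mem_insert, Finset.mem_singleton] at hzl
    rcases hzl with rfl | rfl | rfl
    · exact absurd hzc hnf_d
    · exact absurd hzc hnf_e
    · exact hzc
  -- the line q2 through b, f, g
  obtain ⟨q2, hq2, hbq2, hgq2⟩ := hbg.2
  have ho_q2 : o ≠ q2 := fun h => hb_o (by rw [h]; exact hbq2)
  have hf_q2 : f ∈ q2 := by
    obtain ⟨_, l, hl, hfl, hgl⟩ := hfg
    rcases pigeon g ho hgo hq2 hgq2 ho_q2 l hl hgl with rfl | rfl
    · exact absurd hfl hf_o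
    · exact hfl
  have hbf : b ≠ f := fun h => hb_n (by rw [h]; exact hfn)
  have hbg_ne : b ≠ g := fun h => hb_o (by rw [h]; exact hgo)
  have hfg_ne : f ≠ g := fun h => hf_o (by rw [h]; exact hgo)
  have hq2e : q2 = {b, f, g} := by
    refine (Finset.eq_of_subset_of_card_le ?_ ?_).symm
    · simp [Finset.insert_subset_iff, hbq2, hf_q2, hgq2]
    · rw [S.three_points q2 hq2,
        Finset.card_insert_of_notMem (by simp [hbf, hbg_ne]),
        Finset.card_pair hfg_ne]
  -- group-theoretic part
  have sqr : ∀ p : P, ρ.r p * ρ.r p = 1 := by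
    intro p
    have h := pow_orderOf_eq_one (ρ.r p)
    rw [ρ.order_two p, pow_two] at h
    exact h
  have rne1 : ∀ p : P, ρ.r p ≠ 1 := by
    intro p h
    have h2 := ρ.order_two p
    rw [h, orderOf_one] at h2
    exact absurd h2 (by norm_num)
  have hinv : ∀ p : P, (ρ.r p)⁻¹ = ρ.r p := fun p =>
    inv_eq_of_mul_eq_one_right (sqr p)
  have hfeq : ∀ p q : P, ρ.r p * ρ.r q = 1 → p = q := by
    intro p q h
    apply hf
    have h2 := eq_inv_of_mul_eq_one_left h
    rwa [hinv] at h2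
  have lrel : ∀ {l : Finset P}, l ∈ S.lines → ∀ {p q s : P}, p ∈ l → q ∈ l →
      s ∈ l → p ≠ q → p ≠ s → q ≠ s → ρ.r p * ρ.r q = ρ.r s := by
    intro l hl p q s hp hq hs h1 h2 h3
    exact ρ.line_rel l hl p hp q hq s hs h1 h2 h3
  have rxa : ρ.r x * ρ.r a = ρ.r b := lrel hl1.1 hl1.2 hal1 hbl1 hxa hxb hab
  have rax : ρ.r a * ρ.r x = ρ.r b := lrel hl1.1 hal1 hl1.2 hbl1 (Ne.symm hxa) hab hxb
  have rxc : ρ.r x * ρ.r c = ρ.r d := lrel hl2.1 hl2.2 hcl2 hdl2 hxc hxd hcd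
  have rcx : ρ.r c * ρ.r x = ρ.r d := lrel hl2.1 hcl2 hl2.2 hdl2 (Ne.symm hxc) hcd hxd
  have ray : ρ.r a * ρ.r y = ρ.r e := lrel hm ham hym hem (Ne.symm hya.1) (Ne.symm hea) (Ne.symm hey)
  have rya : ρ.r y * ρ.r a = ρ.r e := lrel hm hym ham hem hya.1 (Ne.symm hey) (Ne.symm hea)
  have rcy : ρ.r c * ρ.r y = ρ.r f := lrel hn hcn hyn hfn (Ne.symm hyc.1) (Ne.symm hfc) (Ne.symm hfy)
  have ryc : ρ.r y * ρ.r c = ρ.r f := lrel hn hyn hcn hfn hyc.1 (Ne.symm hfy) (Ne.symm hfc)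
  have rde : ρ.r d * ρ.r e = ρ.r g := lrel ho hdo heo hgo (Ne.symm hed.1) (Ne.symm hgd) (Ne.symm hge)
  have red : ρ.r e * ρ.r d = ρ.r g := lrel ho heo hdo hgo hed.1 (Ne.symm hge) (Ne.symm hgd)
  have rbf : ρ.r b * ρ.r f = ρ.r g := lrel hq2 hbq2 hf_q2 hgq2 hbf hbg_ne hfg_ne
  -- commutation relations
  have cuv : Commute (ρ.r x) (ρ.r a) := rxa.trans rax.symm
  have cuw : Commute (ρ.r x) (ρ.r c) := rxc.trans rcx.symm
  have cvk : Commute (ρ.r a) (ρ.r y) := ray.trans rya.symm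
  have cwk : Commute (ρ.r c) (ρ.r y) := rcy.trans ryc.symm
  have cvw : Commute (ρ.r a) (ρ.r c) := by
    have h : (ρ.r x * ρ.r a) * (ρ.r c * ρ.r y) = (ρ.r x * ρ.r c) * (ρ.r a * ρ.r y) := by
      rw [rxa, rcy, rxc, ray]
      exact rbf.trans rde.symm
    rw [mul_assoc, mul_assoc] at h
    have h2 := mul_left_cancel h
    rw [← mul_assoc, ← mul_assoc] at h2
    exact mul_right_cancel h2
  have cuk : Commute (ρ.r x) (ρ.r y) := by
    have hC : Commute (ρ.r e) (ρ.r d) := red.trans rde.symm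
    have hC2 : Commute (ρ.r a * ρ.r y) (ρ.r x * ρ.r c) := by
      rw [ray, rxc]; exact hC
    have hCa : Commute (ρ.r a) (ρ.r x * ρ.r c) :=
      Commute.mul_right cuv.symm cvw
    have h4 : Commute ((ρ.r a)⁻¹ * (ρ.r a * ρ.r y)) (ρ.r x * ρ.r c) :=
      Commute.mul_left hCa.inv_left hC2
    rw [inv_mul_cancel_left] at h4
    have h5 : Commute (ρ.r y) ((ρ.r x * ρ.r c) * (ρ.r c)⁻¹) :=
      Commute.mul_right h4 cwk.symm.inv_right
    rw [mul_inv_cancel_right] at h5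
    exact h5.symm
  -- every point is one of the nine
  have hcover : ∀ p : P,
      (p = x ∨ p = a ∨ p = b ∨ p = c ∨ p = d ∨ p = y ∨ p = e ∨ p = f ∨ p = g) →
      ∀ l ∈ S.lines, p ∈ l →
      l = l1 ∨ l = l2 ∨ l = m ∨ l = n ∨ l = o ∨ l = q2 := by
    have hl1q2 : l1 ≠ q2 := fun h => hf_l1 (by rw [h]; exact hf_q2)
    have hl2o : l2 ≠ o := fun h => he_l2 (by rw [h]; exact heo)
    have hnq2 : n ≠ q2 := fun h => hb_n (by rw [h]; exact hbq2)
    intro p hp l hl hpl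
    rcases hp with rfl | rfl | rfl | rfl | rfl | rfl | rfl | rfl | rfl
    · rcases pigeon p hl1.1 hl1.2 hl2.1 hl2.2 hl12 l hl hpl with rfl | rfl
      · exact Or.inl rfl
      · exact Or.inr (Or.inl rfl)
    · rcases pigeon p hl1.1 hal1 hm ham hl1m l hl hpl with rfl | rfl
      · exact Or.inl rfl
      · exact Or.inr (Or.inr (Or.inl rfl))
    · rcases pigeon p hl1.1 hbl1 hq2 hbq2 hl1q2 l hl hpl with rfl | rfl
      · exact Or.inl rfl
      · exact Or.inr (Or.inr (Or.inr (Or.inr (Or.inr (rfl)))))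
    · rcases pigeon p hl2.1 hcl2 hn hcn hl2n l hl hpl with rfl | rfl
      · exact Or.inr (Or.inl rfl)
      · exact Or.inr (Or.inr (Or.inr (Or.inl rfl)))
    · rcases pigeon p hl2.1 hdl2 ho hdo hl2o l hl hpl with rfl | rfl
      · exact Or.inr (Or.inl rfl)
      · exact Or.inr (Or.inr (Or.inr (Or.inr (Or.inl rfl))))
    · rcases pigeon p hm hym hn hyn hmn l hl hpl with rfl | rfl
      · exact Or.inr (Or.inr (Or.inl rfl))
      · exact Or.inr (Or.inr (Or.inr (Or.inl rfl)))
    · rcases pigeon p hm hem ho heo hm_o l hl hpl with rfl | rfl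
      · exact Or.inr (Or.inr (Or.inl rfl))
      · exact Or.inr (Or.inr (Or.inr (Or.inr (Or.inl rfl))))
    · rcases pigeon p hn hfn hq2 hf_q2 hnq2 l hl hpl with rfl | rfl
      · exact Or.inr (Or.inr (Or.inr (Or.inl rfl)))
      · exact Or.inr (Or.inr (Or.inr (Or.inr (Or.inr (rfl)))))
    · rcases pigeon p ho hgo hq2 hgq2 ho_q2 l hl hpl with rfl | rfl
      · exact Or.inr (Or.inr (Or.inr (Or.inr (Or.inl rfl))))
      · exact Or.inr (Or.inr (Or.inr (Or.inr (Or.inr (rfl)))))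
  have hlinesub : ∀ l : Finset P,
      (l = l1 ∨ l = l2 ∨ l = m ∨ l = n ∨ l = o ∨ l = q2) → ∀ p ∈ l,
      (p = x ∨ p = a ∨ p = b ∨ p = c ∨ p = d ∨ p = y ∨ p = e ∨ p = f ∨ p = g) := by
    intro l hl p hp
    rcases hl with rfl | rfl | rfl | rfl | rfl | rfl
    · rw [hl1e] at hp
      simp only [Finset.mem_insert, Finset.mem_singleton] at hp
      rcases hp with rfl | rfl | rfl
      · exact Or.inl rfl
      · exact Or.inr (Or.inl rfl)
      · exact Or.inr (Or.inr (Or.inl rfl))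
    · rw [hl2e] at hp
      simp only [Finset.mem_insert, Finset.mem_singleton] at hp
      rcases hp with rfl | rfl | rfl
      · exact Or.inl rfl
      · exact Or.inr (Or.inr (Or.inr (Or.inl rfl)))
      · exact Or.inr (Or.inr (Or.inr (Or.inr (Or.inl rfl))))
    · rw [hme] at hp
      simp only [Finset.mem_insert, Finset.mem_singleton] at hp
      rcases hp with rfl | rfl | rfl
      · exact Or.inr (Or.inr (Or.inr (Or.inr (Or.inr (Or.inl rfl)))))
      · exact Or.inr (Or.inl rfl)
      · exact Or.inr (Or.inr (Or.inr (Or.inr (Or.inr (Or.inr (Or.inl rfl))))))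
    · rw [hne] at hp
      simp only [Finset.mem_insert, Finset.mem_singleton] at hp
      rcases hp with rfl | rfl | rfl
      · exact Or.inr (Or.inr (Or.inr (Or.inr (Or.inr (Or.inl rfl)))))
      · exact Or.inr (Or.inr (Or.inr (Or.inl rfl)))
      · exact Or.inr (Or.inr (Or.inr (Or.inr (Or.inr (Or.inr (Or.inr (Or.inl rfl)))))))
    · rw [hoe] at hp
      simp only [Finset.mem_insert, Finset.mem_singleton] at hp
      rcases hp with rfl | rfl | rfl
      · exact Or.inr (Or.inr (Or.inr (Or.inr (Or.inl rfl))))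
      · exact Or.inr (Or.inr (Or.inr (Or.inr (Or.inr (Or.inr (Or.inl rfl))))))
      · exact Or.inr (Or.inr (Or.inr (Or.inr (Or.inr (Or.inr (Or.inr (Or.inr (rfl))))))))
    · rw [hq2e] at hp
      simp only [Finset.mem_insert, Finset.mem_singleton] at hp
      rcases hp with rfl | rfl | rfl
      · exact Or.inr (Or.inr (Or.inl rfl))
      · exact Or.inr (Or.inr (Or.inr (Or.inr (Or.inr (Or.inr (Or.inr (Or.inl rfl)))))))
      · exact Or.inr (Or.inr (Or.inr (Or.inr (Or.inr (Or.inr (Or.inr (Or.inr (rfl))))))))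
  have hallQ : ∀ p : P,
      (p = x ∨ p = a ∨ p = b ∨ p = c ∨ p = d ∨ p = y ∨ p = e ∨ p = f ∨ p = g) := by
    have key : ∀ (q1 q2 : P), S.graph.Walk q1 q2 →
        (q1 = x ∨ q1 = a ∨ q1 = b ∨ q1 = c ∨ q1 = d ∨ q1 = y ∨ q1 = e ∨ q1 = f ∨ q1 = g) →
        (q2 = x ∨ q2 = a ∨ q2 = b ∨ q2 = c ∨ q2 = d ∨ q2 = y ∨ q2 = e ∨ q2 = f ∨ q2 = g) := by
      intro q1 q2 wk
      induction wk with
      | nil => exact id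
      | cons hadj _ ih =>
        intro h1
        apply ih
        obtain ⟨_, l, hl, hpl, hql⟩ := (hadj : S.Collinear _ _)
        exact hlinesub l (hcover _ h1 l hl hpl) _ hql
    intro p
    obtain ⟨wk⟩ := hconn.preconnected x p
    exact key x p wk (Or.inl rfl)
  -- the group is generated by the four involutions
  have hgen : Subgroup.closure ({ρ.r x, ρ.r a, ρ.r c, ρ.r y} : Set R) = ⊤ := by
    rw [eq_top_iff, ← ρ.gen]
    refine (Subgroup.closure_le _).mpr ?_
    rintro _ ⟨p, rfl⟩
    have hu : ρ.r x ∈ Subgroup.closure ({ρ.r x, ρ.r a, ρ.r c, ρ.r y} : Set R) :=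
      Subgroup.subset_closure (by simp)
    have hv : ρ.r a ∈ Subgroup.closure ({ρ.r x, ρ.r a, ρ.r c, ρ.r y} : Set R) :=
      Subgroup.subset_closure (by simp)
    have hw : ρ.r c ∈ Subgroup.closure ({ρ.r x, ρ.r a, ρ.r c, ρ.r y} : Set R) :=
      Subgroup.subset_closure (by simp)
    have hk : ρ.r y ∈ Subgroup.closure ({ρ.r x, ρ.r a, ρ.r c, ρ.r y} : Set R) :=
      Subgroup.subset_closure (by simp)
    rcases hallQ p with rfl | rfl | rfl | rfl | rfl | rfl | rfl | rfl | rfl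
    · exact hu
    · exact hv
    · rw [← rxa]; exact mul_mem hu hv
    · exact hw
    · rw [← rxc]; exact mul_mem hu hw
    · exact hk
    · rw [← ray]; exact mul_mem hv hk
    · rw [← rcy]; exact mul_mem hw hk
    · rw [← rbf, ← rxa, ← rcy]; exact mul_mem (mul_mem hu hv) (mul_mem hw hk)
  -- kernel of quadF is trivial
  have haf : a ≠ f := fun h => ha_n (h ▸ hfn)
  have hxf : x ≠ f := fun h => hx_n (h ▸ hfn)
  have hker : ∀ s : V4, quadF (ρ.r x) (ρ.r a) (ρ.r c) (ρ.r y) s = 1 → s = 0 := by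
    have hzc2 : ∀ i : ZMod 2, i = 0 ∨ i = 1 := by decide
    have val0 : (0 : ZMod 2).val = 0 := rfl
    have val1 : (1 : ZMod 2).val = 1 := rfl
    rintro ⟨i, j, kk, nn⟩ h
    simp only [quadF] at h
    rcases hzc2 i with rfl | rfl <;> rcases hzc2 j with rfl | rfl <;>
      rcases hzc2 kk with rfl | rfl <;> rcases hzc2 nn with rfl | rfl <;>
      simp only [val0, val1, pow_zero, pow_one, one_mul, mul_one] at h
    · rfl
    · exact absurd h (rne1 y)
    · exact absurd h (rne1 c)
    · rw [rcy] at h; exact absurd h (rne1 f)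
    · exact absurd h (rne1 a)
    · rw [ray] at h; exact absurd h (rne1 e)
    · exact absurd (hfeq a c h) hac
    · rw [rcy] at h; exact absurd (hfeq a f h) haf
    · exact absurd h (rne1 x)
    · exact absurd (hfeq x y h) hxy_ne
    · rw [rxc] at h; exact absurd h (rne1 d)
    · rw [rcy] at h; exact absurd (hfeq x f h) hxf
    · rw [rxa] at h; exact absurd h (rne1 b)
    · rw [rxa] at h; exact absurd (hfeq b y h) (Ne.symm hyb)
    · rw [rxa] at h; exact absurd (hfeq b c h) hbc
    · rw [rxa, rcy, rbf] at h; exact absurd h (rne1 g)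
  -- conclude
  have hbij := quadF_bij cuv cuw cuk cvw cvk cwk
    (sqr x) (sqr a) (sqr c) (sqr y) hgen hker
  have hcard := Nat.card_eq_of_bijective _ hbij
  rw [← hcard]
  simp [Nat.card_prod, Nat.card_zmod]
end
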